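/- Let ℓ be a positive measurable function on (0,∞) slowly varying at infinity and let α ∈ (0,2). Then there exist R > 0 and C > 0 such that for all 0 < r ≤ R, ∫_r^∞ (ℓ(s^{−2}))^{1/2} / s^{1+α/2} ds ≤ C (ℓ(r^{−2}))^{1/2} / r^{α/2}. -/

import Mathlib

open Real MeasureTheory Filter Set

lemma meas_tendsto_zero (S : ℕ → Set ℝ) (hS : ∀ k, MeasurableSet (S k))
    (hsub : ∀ k, S k ⊆ Set.Icc (0:ℝ) 2)
    (hpt : ∀ s : ℝ, ∀ᶠ k in atTop, s ∉ S k) :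
    Tendsto (fun k => volume (S k)) atTop (nhds 0) := by
  have := tendsto_measure_of_ae_tendsto_indicator (μ := volume) atTop
    (A := (∅ : Set ℝ)) MeasurableSet.empty hS (measurableSet_Icc (a := (0:ℝ)) (b := 2))
    (by simp) (Eventually.of_forall hsub)
    (Eventually.of_forall (fun x => by
      filter_upwards [hpt x] with k hk
      simp [hk]))
  simpa using this

lemma uct (h : ℝ → ℝ) (hm : Measurable h)
    (hp : ∀ t : ℝ, Tendsto (fun u => h (u + t) - h u) atTop (nhds 0))
    {ε : ℝ} (hε : 0 < ε) :
    ∃ N : ℝ, ∀ u, N ≤ u → ∀ t ∈ Set.Icc (0:ℝ) 1, |h (u + t) - h u| ≤ ε := by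
  by_contra hcon
  push_neg at hcon
  choose u hu t ht hεt using hcon
  set U : ℕ → ℝ := fun k => u (k : ℝ) with hU
  have hUk : ∀ k : ℕ, (k : ℝ) ≤ U k := fun k => hu _
  have hUtop : Tendsto U atTop atTop :=
    tendsto_atTop_mono hUk tendsto_natCast_atTop_atTop
  set T : ℕ → ℝ := fun k => t (k : ℝ) with hT
  have hT0 : ∀ k, T k ∈ Set.Icc (0:ℝ) 1 := fun k => ht _
  have hUTtop : Tendsto (fun k => U k + T k) atTop atTop :=
    tendsto_atTop_mono (fun k => le_add_of_nonneg_right (hT0 k).1) hUtop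
  -- the bad sets
  set Y : ℕ → Set ℝ := fun k => {s ∈ Set.Icc (0:ℝ) 2 | ε/3 ≤ |h (U k + s) - h (U k)|} with hY
  set Z : ℕ → Set ℝ := fun k => {s ∈ Set.Icc (0:ℝ) 2 | ε/3 ≤ |h ((U k + T k) + s) - h (U k + T k)|} with hZ
  have hYm : ∀ k, MeasurableSet (Y k) := by
    intro k
    exact measurableSet_Icc.inter <| measurableSet_le measurable_const
      (((hm.comp (measurable_const_add (U k))).sub measurable_const).abs)
  have hZm : ∀ k, MeasurableSet (Z k) := by
    intro k
    exact measurableSet_Icc.inter <| measurableSet_le measurable_const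
      (((hm.comp (measurable_const_add (U k + T k))).sub measurable_const).abs)
  have hYsub : ∀ k, Y k ⊆ Set.Icc (0:ℝ) 2 := fun k x hx => hx.1
  have hZsub : ∀ k, Z k ⊆ Set.Icc (0:ℝ) 2 := fun k x hx => hx.1
  have hYpt : ∀ s : ℝ, ∀ᶠ k in atTop, s ∉ Y k := by
    intro s
    have := (hp s).comp hUtop
    have hev : ∀ᶠ k in atTop, |h (U k + s) - h (U k)| < ε/3 := by
      have := this.eventually (eventually_abs_sub_lt 0 (by positivity : (0:ℝ) < ε/3))
      simpa using this
    filter_upwards [hev] with k hk hmem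
    exact absurd hmem.2 (not_le.2 hk)
  have hZpt : ∀ s : ℝ, ∀ᶠ k in atTop, s ∉ Z k := by
    intro s
    have := (hp s).comp hUTtop
    have hev : ∀ᶠ k in atTop, |h ((U k + T k) + s) - h (U k + T k)| < ε/3 := by
      have := this.eventually (eventually_abs_sub_lt 0 (by positivity : (0:ℝ) < ε/3))
      simpa using this
    filter_upwards [hev] with k hk hmem
    exact absurd hmem.2 (not_le.2 hk)
  have hYvol := meas_tendsto_zero Y hYm hYsub hYpt
  have hZvol := meas_tendsto_zero Z hZm hZsub hZpt
  have hYsm : ∀ᶠ k in atTop, volume (Y k) < 1/2 :=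
    hYvol.eventually_lt_const (by norm_num)
  have hZsm : ∀ᶠ k in atTop, volume (Z k) < 1/2 :=
    hZvol.eventually_lt_const (by norm_num)
  obtain ⟨k, hYk, hZk⟩ := (hYsm.and hZsm).exists
  -- translate of Z
  set W : Set ℝ := (fun x => x + (- T k)) ⁻¹' (Z k) with hW
  have hWvol : volume W = volume (Z k) := by
    exact (measurePreserving_add_right volume (-T k)).measure_preimage (hZm k).nullMeasurableSet
  have hcover : ¬ (Set.Icc (1:ℝ) 2 ⊆ Y k ∪ W) := by
    intro hsub
    have h1 : volume (Set.Icc (1:ℝ) 2) ≤ volume (Y k ∪ W) := measure_mono hsub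
    have h2 : volume (Y k ∪ W) ≤ volume (Y k) + volume W := measure_union_le _ _
    rw [Real.volume_Icc] at h1
    rw [hWvol] at h2
    have : (1:ENNReal) ≤ volume (Y k) + volume (Z k) := by
      calc (1:ENNReal) = ENNReal.ofReal (2 - 1) := by norm_num
      _ ≤ _ := le_trans h1 h2
    have hlt : volume (Y k) + volume (Z k) < 1/2 + 1/2 :=
      ENNReal.add_lt_add hYk hZk
    rw [ENNReal.add_halves] at hlt
    exact absurd (lt_of_le_of_lt this hlt) (lt_irrefl _)
  obtain ⟨s, hs12, hsYW⟩ := not_subset.1 hcover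
  have hsY : s ∉ Y k := fun hmem => hsYW (Or.inl hmem)
  have hsW : s - T k ∉ Z k := by
    intro hmem
    exact hsYW (Or.inr (by simpa [hW, sub_eq_add_neg] using hmem))
  have hs02 : s ∈ Set.Icc (0:ℝ) 2 := ⟨le_trans zero_le_one hs12.1, hs12.2⟩
  have hst02 : s - T k ∈ Set.Icc (0:ℝ) 2 :=
    ⟨by linarith [hs12.1, (hT0 k).2], by linarith [hs12.2, (hT0 k).1]⟩
  have h1 : |h (U k + s) - h (U k)| < ε/3 := by
    by_contra hcc
    exact hsY ⟨hs02, not_lt.1 hcc⟩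
  have h2 : |h ((U k + T k) + (s - T k)) - h (U k + T k)| < ε/3 := by
    by_contra hcc
    exact hsW ⟨hst02, not_lt.1 hcc⟩
  have key : ε < |h (U k + T k) - h (U k)| := hεt (k : ℝ)
  have heq : (U k + T k) + (s - T k) = U k + s := by ring
  rw [heq] at h2
  have : |h (U k + T k) - h (U k)| ≤ |h (U k + s) - h (U k + T k)| + |h (U k + s) - h (U k)| := by
    have := abs_sub_le (h (U k + T k)) (h (U k + s)) (h (U k))
    calc |h (U k + T k) - h (U k)| ≤ |h (U k + T k) - h (U k + s)| + |h (U k + s) - h (U k)| := this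
    _ = |h (U k + s) - h (U k + T k)| + |h (U k + s) - h (U k)| := by rw [abs_sub_comm]
  have hcomm : |h (U k + s) - h (U k + T k)| = |h (U k + T k) - h (U k + s)| := abs_sub_comm _ _
  linarith

lemma steps (h : ℝ → ℝ) {ε N : ℝ}
    (hN : ∀ u, N ≤ u → ∀ t ∈ Set.Icc (0:ℝ) 1, |h (u + t) - h u| ≤ ε) :
    ∀ n : ℕ, ∀ u v : ℝ, N ≤ u → u ≤ v → v - u ≤ n → |h v - h u| ≤ n * ε := by
  have hε0 : 0 ≤ ε := by
    have := hN N le_rfl 0 ⟨le_rfl, zero_le_one⟩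
    simpa using le_trans (abs_nonneg _) this
  intro n
  induction n with
  | zero =>
    intro u v hu huv hvu
    have : v = u := le_antisymm (by simpa using hvu) huv
    simp [this]
  | succ n ih =>
    intro u v hu huv hvu
    by_cases hc : v - u ≤ n
    · calc |h v - h u| ≤ n * ε := ih u v hu huv hc
      _ ≤ (n + 1 : ℕ) * ε := by
          apply mul_le_mul_of_nonneg_right _ hε0
          exact_mod_cast Nat.le_succ n
    · push_neg at hc
      by_cases h1 : v - u ≤ 1
      · have : |h (u + (v - u)) - h u| ≤ ε := hN u hu (v - u) ⟨by linarith, h1⟩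
        rw [show u + (v - u) = v by ring] at this
        calc |h v - h u| ≤ ε := this
        _ = 1 * ε := (one_mul ε).symm
        _ ≤ (n + 1 : ℕ) * ε := by
            apply mul_le_mul_of_nonneg_right _ hε0
            exact_mod_cast Nat.one_le_iff_ne_zero.2 (Nat.succ_ne_zero n)
      · push_neg at h1
        have hstep : |h (u + 1) - h u| ≤ ε := by
          simpa using hN u hu 1 ⟨zero_le_one, le_rfl⟩
        have hrest : |h v - h (u + 1)| ≤ n * ε := by
          apply ih (u + 1) v (by linarith) (by linarith) (by push_cast at hvu ⊢; linarith)
        calc |h v - h u| ≤ |h v - h (u+1)| + |h (u+1) - h u| := abs_sub_le _ _ _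
        _ ≤ n * ε + ε := add_le_add hrest hstep
        _ = (n + 1 : ℕ) * ε := by push_cast; ring

lemma potter_h (h : ℝ → ℝ) (hm : Measurable h)
    (hp : ∀ t : ℝ, Tendsto (fun u => h (u + t) - h u) atTop (nhds 0))
    {ε : ℝ} (hε : 0 < ε) :
    ∃ N : ℝ, ∀ u v : ℝ, N ≤ u → u ≤ v → |h v - h u| ≤ ε * (v - u) + ε := by
  obtain ⟨N, hN⟩ := uct h hm hp hε
  refine ⟨N, fun u v hu huv => ?_⟩
  have h0 : (0:ℝ) ≤ v - u := by linarith
  have h1 : v - u ≤ (⌈v - u⌉₊ : ℝ) := Nat.le_ceil _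
  have h2 : (⌈v - u⌉₊ : ℝ) < v - u + 1 := Nat.ceil_lt_add_one h0
  calc |h v - h u| ≤ (⌈v - u⌉₊ : ℝ) * ε := steps h hN _ u v hu (by linarith) h1
  _ ≤ (v - u + 1) * ε := mul_le_mul_of_nonneg_right h2.le hε.le
  _ = ε * (v - u) + ε := by ring

lemma potter (ℓ : ℝ → ℝ) (hpos : ∀ x > 0, 0 < ℓ x) (hmeas : Measurable ℓ)
    (hsv : ∀ lam > 0, Filter.Tendsto (fun x => ℓ (lam * x) / ℓ x) Filter.atTop (nhds 1))
    {ε : ℝ} (hε : 0 < ε) :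
    ∃ X : ℝ, 1 ≤ X ∧ ∀ x y : ℝ, X ≤ x → x ≤ y →
      ℓ y ≤ Real.exp ε * (y/x) ^ ε * ℓ x ∧ ℓ x ≤ Real.exp ε * (y/x) ^ ε * ℓ y := by
  set h : ℝ → ℝ := fun u => Real.log (ℓ (Real.exp u)) with hh
  have hm : Measurable h := Real.measurable_log.comp (hmeas.comp Real.measurable_exp)
  have hp : ∀ t : ℝ, Tendsto (fun u => h (u + t) - h u) atTop (nhds 0) := by
    intro t
    have h1 : Tendsto (fun u : ℝ => ℓ (Real.exp t * Real.exp u) / ℓ (Real.exp u))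
        atTop (nhds 1) := (hsv (Real.exp t) (Real.exp_pos t)).comp Real.tendsto_exp_atTop
    have h2 : Tendsto (fun u : ℝ => Real.log (ℓ (Real.exp t * Real.exp u) / ℓ (Real.exp u)))
        atTop (nhds 0) := by
      have := (Real.continuousAt_log one_ne_zero).tendsto.comp h1
      simpa [Function.comp_def] using this
    apply h2.congr
    intro u
    rw [Real.log_div (ne_of_gt (hpos _ (by positivity))) (ne_of_gt (hpos _ (Real.exp_pos u)))]
    rw [hh]
    simp only []
    rw [← Real.exp_add]
    ring_nf
  obtain ⟨N, hN⟩ := potter_h h hm hp hε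
  refine ⟨max 1 (Real.exp N), le_max_left _ _, fun x y hx hxy => ?_⟩
  have hx0 : (0:ℝ) < x := lt_of_lt_of_le one_pos (le_trans (le_max_left _ _) hx)
  have hy0 : (0:ℝ) < y := lt_of_lt_of_le hx0 hxy
  have hNx : N ≤ Real.log x := by
    rw [← Real.log_exp N]
    exact Real.log_le_log (Real.exp_pos N) (le_trans (le_max_right _ _) hx)
  have hlxy : Real.log x ≤ Real.log y := Real.log_le_log hx0 hxy
  have key := hN (Real.log x) (Real.log y) hNx hlxy
  have hhx : h (Real.log x) = Real.log (ℓ x) := by rw [hh]; simp [Real.exp_log hx0]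
  have hhy : h (Real.log y) = Real.log (ℓ y) := by rw [hh]; simp [Real.exp_log hy0]
  rw [hhx, hhy] at key
  have hsub : Real.log y - Real.log x = Real.log (y / x) := (Real.log_div (ne_of_gt hy0) (ne_of_gt hx0)).symm
  rw [hsub] at key
  have hrpow : Real.exp ε * (y/x) ^ ε = Real.exp (ε * Real.log (y/x) + ε) := by
    rw [Real.exp_add, Real.rpow_def_of_pos (by positivity : (0:ℝ) < y/x)]
    ring
  have hposx := hpos x hx0
  have hposy := hpos y hy0
  constructor
  · have : Real.log (ℓ y) - Real.log (ℓ x) ≤ ε * Real.log (y/x) + ε :=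
      le_trans (le_abs_self _) key
    have h3 : ℓ y ≤ ℓ x * Real.exp (ε * Real.log (y/x) + ε) := by
      rw [← Real.exp_log hposy, ← Real.exp_log hposx, ← Real.exp_add]
      exact Real.exp_le_exp.2 (by linarith)
    rw [hrpow]; linarith [h3]
  · have : Real.log (ℓ x) - Real.log (ℓ y) ≤ ε * Real.log (y/x) + ε := by
      have := neg_abs_le (Real.log (ℓ y) - Real.log (ℓ x))
      linarith [key, abs_nonneg (Real.log (ℓ y) - Real.log (ℓ x)), neg_le_abs (Real.log (ℓ y) - Real.log (ℓ x)), abs_sub_comm (Real.log (ℓ y)) (Real.log (ℓ x)) ▸ le_abs_self (Real.log (ℓ x) - Real.log (ℓ y))]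
    have h3 : ℓ x ≤ ℓ y * Real.exp (ε * Real.log (y/x) + ε) := by
      rw [← Real.exp_log hposy, ← Real.exp_log hposx, ← Real.exp_add]
      exact Real.exp_le_exp.2 (by linarith)
    rw [hrpow]; linarith [h3]

theorem stmt_8 (ℓ : ℝ → ℝ) (hpos : ∀ x > 0, 0 < ℓ x) (hmeas : Measurable ℓ)
    (hsv : ∀ lam > 0, Filter.Tendsto (fun x => ℓ (lam * x) / ℓ x) Filter.atTop (nhds 1))
    (α : ℝ) (hα : α ∈ Set.Ioo (0 : ℝ) 2) :
    ∃ R > (0 : ℝ), ∃ C > (0 : ℝ), ∀ r : ℝ, 0 < r → r ≤ R →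
      (∫ s in Set.Ioi r, (ℓ (s ^ (-2 : ℝ))) ^ ((1 : ℝ) / 2) / s ^ (1 + α / 2)) ≤
        C * (ℓ (r ^ (-2 : ℝ))) ^ ((1 : ℝ) / 2) / r ^ (α / 2) := by
  obtain ⟨hα0, hα2⟩ := hα
  set ε : ℝ := α/4 with hεdef
  have hε : 0 < ε := by rw [hεdef]; linarith
  obtain ⟨X, hX1, hP⟩ := potter ℓ hpos hmeas hsv hε
  have hX0 : (0:ℝ) < X := lt_of_lt_of_le one_pos hX1
  set R0 : ℝ := X ^ (-(1:ℝ)/2) with hR0def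
  have hR0pos : 0 < R0 := Real.rpow_pos_of_pos hX0 _
  have hR0X : R0 ^ (-2:ℝ) = X := by
    rw [hR0def, ← Real.rpow_mul hX0.le]
    norm_num
  -- the main function
  set f : ℝ → ℝ := fun s => (ℓ (s ^ (-2 : ℝ))) ^ ((1 : ℝ) / 2) / s ^ (1 + α / 2) with hfdef
  set L : ℝ → ℝ := fun r => (ℓ (r ^ (-2:ℝ))) ^ ((1:ℝ)/2) with hLdef
  have hLpos : ∀ r : ℝ, 0 < r → 0 < L r := fun r hr =>
    Real.rpow_pos_of_pos (hpos _ (Real.rpow_pos_of_pos hr _)) _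
  -- exponent for the dominating power function
  set p : ℝ := ε - 1 - α/2 with hpdef
  have hplt : p < -1 := by rw [hpdef, hεdef]; linarith
  -- lower bound constant
  set c0 : ℝ := (ℓ X) ^ ((1:ℝ)/2) * Real.exp (-(ε/2)) with hc0def
  have hc0pos : 0 < c0 := mul_pos (Real.rpow_pos_of_pos (hpos X hX0) _) (Real.exp_pos _)
  set m : ℝ := c0 * R0 ^ (-(α/4)) with hmdef
  have hmpos : 0 < m := mul_pos hc0pos (Real.rpow_pos_of_pos hR0pos _)
  -- the lower bound for L r * r^(-α/2)
  have hlow : ∀ r : ℝ, 0 < r → r ≤ R0 → m ≤ L r * r ^ (-(α/2)) := by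
    intro r hr hrR0
    have hXr2 : X ≤ r ^ (-2:ℝ) := by
      rw [← hR0X]
      exact Real.rpow_le_rpow_of_nonpos hr hrR0 (by norm_num)
    have hr2pos : (0:ℝ) < r ^ (-2:ℝ) := Real.rpow_pos_of_pos hr _
    have hsp := (hP X (r ^ (-2:ℝ)) le_rfl hXr2).2
    -- ℓ X ≤ exp ε * (r^(-2)/X)^ε * ℓ (r^(-2))
    have hEq : (r ^ (-2:ℝ) / X) ^ ε = r ^ (-(2:ℝ)*ε) * (X ^ ε)⁻¹ := by
      rw [Real.div_rpow (le_of_lt hr2pos) hX0.le, div_eq_mul_inv, ← Real.rpow_mul hr.le]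
    have hQ : ℓ X * Real.exp (-ε) * r ^ ((2:ℝ)*ε) * X ^ ε ≤ ℓ (r ^ (-2:ℝ)) := by
      rw [hEq] at hsp
      have hXε : (0:ℝ) < X ^ ε := Real.rpow_pos_of_pos hX0 _
      have hrε : (0:ℝ) < r ^ ((2:ℝ)*ε) := Real.rpow_pos_of_pos hr _
      have hinv : r ^ (-(2:ℝ)*ε) = (r ^ ((2:ℝ)*ε))⁻¹ := by
        rw [show (-(2:ℝ)*ε) = -((2:ℝ)*ε) by ring, Real.rpow_neg hr.le]
      rw [hinv] at hsp
      rw [Real.exp_neg]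
      have hexp : (0:ℝ) < Real.exp ε := Real.exp_pos _
      calc ℓ X * (Real.exp ε)⁻¹ * r ^ ((2:ℝ)*ε) * X ^ ε
          ≤ (Real.exp ε * ((r ^ ((2:ℝ)*ε))⁻¹ * (X ^ ε)⁻¹) * ℓ (r ^ (-2:ℝ))) * (Real.exp ε)⁻¹ * r ^ ((2:ℝ)*ε) * X ^ ε := by
            gcongr
      _ = ℓ (r ^ (-2:ℝ)) := by
            field_simp
    have hQ' : ℓ X * Real.exp (-ε) * r ^ ((2:ℝ)*ε) ≤ ℓ (r ^ (-2:ℝ)) := by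
      have hXε1 : (1:ℝ) ≤ X ^ ε := Real.one_le_rpow hX1 hε.le
      nlinarith [mul_pos (mul_pos (hpos X hX0) (Real.exp_pos (-ε))) (Real.rpow_pos_of_pos hr ((2:ℝ)*ε))]
    -- take square roots
    have hQpos : (0:ℝ) < ℓ X * Real.exp (-ε) * r ^ ((2:ℝ)*ε) :=
      mul_pos (mul_pos (hpos X hX0) (Real.exp_pos _)) (Real.rpow_pos_of_pos hr _)
    have hL1 : c0 * r ^ ε ≤ L r := by
      have := Real.rpow_le_rpow hQpos.le hQ' (by norm_num : (0:ℝ) ≤ (1:ℝ)/2)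
      rw [Real.mul_rpow (mul_pos (hpos X hX0) (Real.exp_pos _)).le (Real.rpow_pos_of_pos hr _).le,
        Real.mul_rpow (hpos X hX0).le (Real.exp_pos _).le, ← Real.exp_mul,
        ← Real.rpow_mul hr.le] at this
      calc c0 * r ^ ε = (ℓ X) ^ ((1:ℝ)/2) * Real.exp (-ε * (1/2)) * r ^ ((2:ℝ)*ε*(1/2)) := by
            rw [hc0def]; ring_nf
      _ ≤ L r := this
    have hr2 : (0:ℝ) < r ^ (-(α/2)) := Real.rpow_pos_of_pos hr _
    calc m = c0 * R0 ^ (-(α/4)) := hmdef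
    _ ≤ c0 * r ^ (-(α/4)) :=
        mul_le_mul_of_nonneg_left (Real.rpow_le_rpow_of_nonpos hr hrR0 (by linarith)) hc0pos.le
    _ = c0 * (r ^ ε * r ^ (-(α/2))) := by
        rw [← Real.rpow_add hr]
        congr 1
        rw [hεdef]; ring
    _ = (c0 * r ^ ε) * r ^ (-(α/2)) := by ring
    _ ≤ L r * r ^ (-(α/2)) := mul_le_mul_of_nonneg_right hL1 hr2.le
  -- the integral tail constant
  set A : ℝ := ∫ s in Set.Ioi R0, f s with hAdef
  set C1 : ℝ := Real.exp (ε/2) * (4/α) with hC1def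
  have hC1pos : 0 < C1 := mul_pos (Real.exp_pos _) (by positivity)
  set C2 : ℝ := (|A| + 1)/m with hC2def
  have hC2pos : 0 < C2 := div_pos (by positivity) hmpos
  refine ⟨R0, hR0pos, C1 + C2, by positivity, fun r hr hrR0 => ?_⟩
  have hLr := hLpos r hr
  -- rewrite the RHS
  have hRHS : (C1 + C2) * L r / r ^ (α/2) = (C1 + C2) * (L r * r ^ (-(α/2))) := by
    rw [Real.rpow_neg hr.le]
    ring
  show (∫ s in Set.Ioi r, f s) ≤ (C1 + C2) * L r / r ^ (α/2)
  rw [hRHS]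
  by_cases hint : IntegrableOn f (Set.Ioi r) volume
  swap
  · rw [MeasureTheory.integral_undef hint]
    positivity
  · -- split the integral
    have hsplit : (∫ s in Set.Ioi r, f s)
        = (∫ s in Set.Ioc r R0, f s) + ∫ s in Set.Ioi R0, f s := by
      rw [← Set.Ioc_union_Ioi_eq_Ioi hrR0]
      exact setIntegral_union (Set.Ioc_disjoint_Ioi le_rfl) measurableSet_Ioi
        (hint.mono_set Set.Ioc_subset_Ioi_self) (hint.mono_set (Set.Ioi_subset_Ioi hrR0))
    -- dominating function
    set K : ℝ := Real.exp (ε/2) * r ^ (-ε) * L r with hKdef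
    have hKpos : 0 < K :=
      mul_pos (mul_pos (Real.exp_pos _) (Real.rpow_pos_of_pos hr _)) hLr
    have hgint : IntegrableOn (fun s => K * s ^ p) (Set.Ioi r) volume :=
      (integrableOn_Ioi_rpow_of_lt hplt hr).const_mul K
    have hpoint : ∀ s ∈ Set.Ioc r R0, f s ≤ K * s ^ p := by
      intro s hs
      have hs0 : (0:ℝ) < s := lt_trans hr hs.1
      have hsX : X ≤ s ^ (-2:ℝ) := by
        rw [← hR0X]
        exact Real.rpow_le_rpow_of_nonpos hs0 hs.2 (by norm_num)
      have hxy : s ^ (-2:ℝ) ≤ r ^ (-2:ℝ) :=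
        Real.rpow_le_rpow_of_nonpos hr hs.1.le (by norm_num)
      have hsp := (hP (s ^ (-2:ℝ)) (r ^ (-2:ℝ)) hsX hxy).2
      have hs2pos : (0:ℝ) < s ^ (-2:ℝ) := Real.rpow_pos_of_pos hs0 _
      have hr2pos : (0:ℝ) < r ^ (-2:ℝ) := Real.rpow_pos_of_pos hr _
      -- ratio as product of powers
      have hEq : (r ^ (-2:ℝ) / s ^ (-2:ℝ)) ^ ε = r ^ (-(2:ℝ)*ε) * s ^ ((2:ℝ)*ε) := by
        have hinv : (s ^ (-2:ℝ))⁻¹ = s ^ (2:ℝ) := by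
          rw [show (-2:ℝ) = -(2:ℝ) by norm_num, Real.rpow_neg hs0.le, inv_inv]
        rw [div_eq_mul_inv, hinv, Real.mul_rpow (Real.rpow_pos_of_pos hr _).le (Real.rpow_pos_of_pos hs0 _).le,
          ← Real.rpow_mul hr.le, ← Real.rpow_mul hs0.le]
      rw [hEq] at hsp
      -- square root of the Potter bound
      have hnum : (ℓ (s ^ (-2:ℝ))) ^ ((1:ℝ)/2)
          ≤ Real.exp (ε/2) * (r ^ (-ε) * s ^ ε) * L r := by
        have hBpos : (0:ℝ) ≤ Real.exp ε * (r ^ (-(2:ℝ)*ε) * s ^ ((2:ℝ)*ε)) * ℓ (r ^ (-2:ℝ)) := by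
          have := hpos _ hr2pos
          positivity
        have h2 := Real.rpow_le_rpow (le_of_lt (hpos _ hs2pos)) hsp (by norm_num : (0:ℝ) ≤ (1:ℝ)/2)
        have h3 : (Real.exp ε * (r ^ (-(2:ℝ)*ε) * s ^ ((2:ℝ)*ε)) * ℓ (r ^ (-2:ℝ))) ^ ((1:ℝ)/2)
            = Real.exp (ε/2) * (r ^ (-ε) * s ^ ε) * L r := by
          rw [Real.mul_rpow (by positivity) (hpos _ hr2pos).le,
            Real.mul_rpow (Real.exp_pos _).le (by positivity),
            Real.mul_rpow (Real.rpow_pos_of_pos hr _).le (Real.rpow_pos_of_pos hs0 _).le,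
            ← Real.exp_mul, ← Real.rpow_mul hr.le, ← Real.rpow_mul hs0.le, hLdef]
          norm_num
          ring_nf
          exact Or.inl trivial
        rw [h3] at h2
        exact h2
      -- divide by s^(1+α/2)
      have hden : (0:ℝ) < s ^ (1 + α/2) := Real.rpow_pos_of_pos hs0 _
      rw [hfdef]
      simp only []
      rw [div_le_iff₀ hden]
      calc (ℓ (s ^ (-2:ℝ))) ^ ((1:ℝ)/2)
          ≤ Real.exp (ε/2) * (r ^ (-ε) * s ^ ε) * L r := hnum
      _ = K * s ^ ε := by rw [hKdef]; ring
      _ = K * (s ^ p * s ^ (1 + α/2)) := by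
          rw [← Real.rpow_add hs0]
          congr 1
          rw [hpdef]; ring_nf
      _ = K * s ^ p * s ^ (1 + α/2) := by ring
    -- bound on the first piece
    have hb1 : (∫ s in Set.Ioc r R0, f s) ≤ C1 * (L r * r ^ (-(α/2))) := by
      have step1 : (∫ s in Set.Ioc r R0, f s) ≤ ∫ s in Set.Ioc r R0, K * s ^ p :=
        setIntegral_mono_on (hint.mono_set Set.Ioc_subset_Ioi_self)
          (hgint.mono_set Set.Ioc_subset_Ioi_self) measurableSet_Ioc hpoint
      have step2 : (∫ s in Set.Ioc r R0, K * s ^ p) ≤ ∫ s in Set.Ioi r, K * s ^ p := by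
        apply setIntegral_mono_set hgint
        · filter_upwards [self_mem_ae_restrict (measurableSet_Ioi : MeasurableSet (Set.Ioi r))] with s hs
          have : (0:ℝ) < s := lt_trans hr hs
          positivity
        · exact (Set.Ioc_subset_Ioi_self).eventuallyLE
      have step3 : (∫ s in Set.Ioi r, K * s ^ p) = K * (-r ^ (p+1)/(p+1)) := by
        rw [MeasureTheory.integral_const_mul, integral_Ioi_rpow_of_lt hplt hr]
      have hp1 : p + 1 = -(α/4) := by rw [hpdef, hεdef]; ring
      have hmerge : r ^ (-ε) * r ^ (-(α/4)) = r ^ (-(α/2)) := by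
        rw [← Real.rpow_add hr]
        congr 1
        rw [hεdef]; ring
      have step4 : K * (-r ^ (p+1)/(p+1)) = C1 * (L r * r ^ (-(α/2))) := by
        rw [hp1, hKdef, hC1def, ← hmerge]
        have hα0' : α ≠ 0 := ne_of_gt hα0
        field_simp
      calc (∫ s in Set.Ioc r R0, f s) ≤ ∫ s in Set.Ioc r R0, K * s ^ p := step1
      _ ≤ ∫ s in Set.Ioi r, K * s ^ p := step2
      _ = K * (-r ^ (p+1)/(p+1)) := step3
      _ = C1 * (L r * r ^ (-(α/2))) := step4
    -- bound on the second piece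
    have hb2 : (∫ s in Set.Ioi R0, f s) ≤ C2 * (L r * r ^ (-(α/2))) := by
      have h1 : (∫ s in Set.Ioi R0, f s) = A := hAdef.symm
      have h2 : A ≤ |A| + 1 := by
        have := le_abs_self A
        linarith
      have h3 : |A| + 1 = C2 * m := by
        rw [hC2def]
        field_simp
      have h4 : C2 * m ≤ C2 * (L r * r ^ (-(α/2))) :=
        mul_le_mul_of_nonneg_left (hlow r hr hrR0) hC2pos.le
      rw [h1]
      linarith
    rw [hsplit]
    linarith
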